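/- For every n : ℕ, the orthogonal group O(n) is a strong deformation retract of the general linear group GL(n, ℝ): there exists a continuous map H : [0,1] × GL(n,ℝ) → GL(n,ℝ) such that H(0, A) = A for every A, H(1, A) is an orthogonal matrix (lies in the image of the canonical inclusion O(n) → GL(n,ℝ)) for every A, and H(t, Q) = Q for every t ∈ [0,1] whenever Q is orthogonal. In particular, the inclusion O(n) → GL(n,ℝ) is a homotopy equivalence of topological spaces. -/

import Mathlib

/-!  STATEMENT 1: The orthogonal group `O(n)` is a strong deformation retract of the
general linear group `GL(n, ℝ)`; in particular the inclusion `O(n) → GL(n, ℝ)` is a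
homotopy equivalence. -/

open scoped unitInterval MatrixGroups

namespace GSDR

open Matrix Submodule Finset InnerProductSpace

variable {n : ℕ}

/-- Work around a stuck instance-synthesis problem for `WellFoundedLT (Fin n)`. -/
instance fin_wflt (n : ℕ) : WellFoundedLT (Fin n) := inferInstanceAs (WellFoundedLT (Fin n))

local notation "⟪" x ", " y "⟫" => @inner ℝ _ _ x y

/-- Columns of a matrix as Euclidean vectors. -/
noncomputable def col (A : Matrix (Fin n) (Fin n) ℝ) (j : Fin n) : EuclideanSpace ℝ (Fin n) :=
  (WithLp.equiv 2 (Fin n → ℝ)).symm (fun i => A i j)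

@[simp] lemma col_apply (A : Matrix (Fin n) (Fin n) ℝ) (j i : Fin n) : col A j i = A i j := rfl

lemma continuous_col (j : Fin n) :
    Continuous fun A : Matrix (Fin n) (Fin n) ℝ => col A j := by
  refine (PiLp.continuous_toLp 2 fun _ : Fin n => ℝ).comp ?_
  exact continuous_pi fun i => (continuous_apply j).comp (continuous_apply i)

lemma col_li {A : Matrix (Fin n) (Fin n) ℝ} (hA : IsUnit A) : LinearIndependent ℝ (col A) := by
  have h : LinearIndependent ℝ (fun j => Aᵀ j) := linearIndependent_cols_iff_isUnit.2 hA
  have h2 := h.map' (WithLp.linearEquiv 2 ℝ (Fin n → ℝ)).symm.toLinearMap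
    (LinearEquiv.ker _)
  exact h2

lemma inner_eq (x y : EuclideanSpace ℝ (Fin n)) : ⟪x, y⟫ = ∑ i, x i * y i := by
  simp [PiLp.inner_apply, RCLike.inner_apply, conj_trivial]
  exact Finset.sum_congr rfl fun _ _ => mul_comm _ _

/-- Continuity of the Gram–Schmidt process in the vectors, on linearly independent families. -/
lemma continuous_gs {X : Type*} [TopologicalSpace X] {f : X → Fin n → EuclideanSpace ℝ (Fin n)}
    (hf : ∀ j, Continuous fun x => f x j) (hli : ∀ x, LinearIndependent ℝ (f x)) :
    ∀ j : Fin n, Continuous fun x => gramSchmidt ℝ (f x) j := by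
  intro j
  induction j using WellFoundedLT.induction with
  | _ j ih =>
    have key : ∀ x, gramSchmidt ℝ (f x) j = f x j - ∑ i ∈ Finset.Iio j,
        (⟪gramSchmidt ℝ (f x) i, f x j⟫ / ((‖gramSchmidt ℝ (f x) i‖ : ℝ) ^ 2)) •
          gramSchmidt ℝ (f x) i := by
      intro x
      rw [gramSchmidt_def]
      congr 1
      refine Finset.sum_congr rfl fun i _ => ?_
      rw [starProjection_singleton]
      norm_num
    simp only [key]
    refine (hf j).sub (continuous_finset_sum _ fun i hi => ?_)
    have hgs := ih i (Finset.mem_Iio.1 hi)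
    have hne : ∀ x, gramSchmidt ℝ (f x) i ≠ 0 := fun x => gramSchmidt_ne_zero i (hli x)
    exact ((hgs.inner (hf j)).div (hgs.norm.pow 2) fun x =>
      pow_ne_zero _ (norm_ne_zero_iff.2 (hne x))).smul hgs

lemma continuous_gsn {X : Type*} [TopologicalSpace X]
    {f : X → Fin n → EuclideanSpace ℝ (Fin n)}
    (hf : ∀ j, Continuous fun x => f x j) (hli : ∀ x, LinearIndependent ℝ (f x)) (j : Fin n) :
    Continuous fun x => gramSchmidtNormed ℝ (f x) j := by
  have hgs := continuous_gs hf hli j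
  have hne : ∀ x, gramSchmidt ℝ (f x) j ≠ 0 := fun x => gramSchmidt_ne_zero j (hli x)
  unfold gramSchmidtNormed
  exact (hgs.norm.inv₀ fun x => norm_ne_zero_iff.2 (hne x)).smul hgs

/-- The orthogonal ("Q") factor of a matrix: its columns are the Gram–Schmidt
orthonormalization of the columns of `A`. -/
noncomputable def Qmat (A : Matrix (Fin n) (Fin n) ℝ) : Matrix (Fin n) (Fin n) ℝ :=
  Matrix.of fun i j => gramSchmidtNormed ℝ (col A) j i

@[simp] lemma Qmat_apply (A : Matrix (Fin n) (Fin n) ℝ) (i j : Fin n) :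
    Qmat A i j = gramSchmidtNormed ℝ (col A) j i := rfl

lemma Qmat_mem_orth {A : Matrix (Fin n) (Fin n) ℝ} (hA : IsUnit A) :
    Qmat A ∈ Matrix.orthogonalGroup (Fin n) ℝ := by
  rw [Matrix.mem_unitaryGroup_iff']
  ext i j
  have horth := gramSchmidtNormed_orthonormal (col_li hA)
  have := (orthonormal_iff_ite.1 horth) i j
  rw [inner_eq] at this
  simp only [Matrix.mul_apply, Matrix.star_apply, Qmat_apply, star_trivial, Matrix.one_apply]
  simpa using this

lemma Qmat_isUnit {A : Matrix (Fin n) (Fin n) ℝ} (hA : IsUnit A) : IsUnit (Qmat A) := by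
  have h := Qmat_mem_orth hA
  exact ⟨⟨Qmat A, star (Qmat A), (Matrix.mem_unitaryGroup_iff).1 h,
    (Matrix.mem_unitaryGroup_iff').1 h⟩, rfl⟩

lemma col_orthonormal {A : Matrix (Fin n) (Fin n) ℝ}
    (hA : A ∈ Matrix.orthogonalGroup (Fin n) ℝ) : Orthonormal ℝ (col A) := by
  rw [orthonormal_iff_ite]
  intro i j
  have h1 : star A * A = 1 := (Matrix.mem_unitaryGroup_iff').1 hA
  have := congrArg (fun M => M i j) h1
  simp only [Matrix.mul_apply, Matrix.star_apply, star_trivial, Matrix.one_apply] at this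
  rw [inner_eq]
  simpa using this

lemma Qmat_of_orth {A : Matrix (Fin n) (Fin n) ℝ}
    (hA : A ∈ Matrix.orthogonalGroup (Fin n) ℝ) : Qmat A = A := by
  have horth := col_orthonormal hA
  have hgs : gramSchmidt ℝ (col A) = col A :=
    gramSchmidt_of_orthogonal ℝ fun i j hij => horth.2 hij
  ext i j
  rw [Qmat_apply, gramSchmidtNormed, hgs, horth.1 j]
  norm_num

/-- The "R" factor. -/
noncomputable def Rmat (A : Matrix (Fin n) (Fin n) ℝ) : Matrix (Fin n) (Fin n) ℝ :=
  star (Qmat A) * A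

lemma Rmat_apply (A : Matrix (Fin n) (Fin n) ℝ) (i j : Fin n) :
    Rmat A i j = ⟪gramSchmidtNormed ℝ (col A) i, col A j⟫ := by
  rw [inner_eq]
  simp [Rmat, Matrix.mul_apply, Matrix.star_apply]

lemma Qmat_mul_Rmat {A : Matrix (Fin n) (Fin n) ℝ} (hA : IsUnit A) :
    Qmat A * Rmat A = A := by
  rw [Rmat, ← Matrix.mul_assoc, (Matrix.mem_unitaryGroup_iff).1 (Qmat_mem_orth hA),
    Matrix.one_mul]

lemma Rmat_triangular {A : Matrix (Fin n) (Fin n) ℝ} (hA : IsUnit A) :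
    (Rmat A).BlockTriangular id := by
  intro i j hij
  rw [Rmat_apply]
  have hz0 : ∀ v ∈ span ℝ (gramSchmidt ℝ (col A) '' Set.Iic j),
      ⟪gramSchmidt ℝ (col A) i, v⟫ = 0 := by
    intro v hv
    induction hv using Submodule.span_induction with
    | mem v hv =>
      obtain ⟨k, hk, rfl⟩ := hv
      have hki : (k : Fin n) < i := lt_of_le_of_lt (Set.mem_Iic.1 hk) hij
      exact gramSchmidt_orthogonal ℝ (col A) hki.ne'
    | zero => simp
    | add v w _ _ hv hw => rw [inner_add_right, hv, hw, add_zero]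
    | smul c v _ hv => rw [real_inner_smul_right, hv, mul_zero]
  have hz : ⟪gramSchmidt ℝ (col A) i, col A j⟫ = 0 :=
    hz0 _ (mem_span_gramSchmidt ℝ (col A) le_rfl)
  rw [gramSchmidtNormed, real_inner_smul_left, hz, mul_zero]

lemma Rmat_diag_pos {A : Matrix (Fin n) (Fin n) ℝ} (hA : IsUnit A) (j : Fin n) :
    0 < Rmat A j j := by
  have hne : gramSchmidt ℝ (col A) j ≠ 0 := gramSchmidt_ne_zero j (col_li hA)
  have hnorm : (0 : ℝ) < ‖gramSchmidt ℝ (col A) j‖ := norm_pos_iff.2 hne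
  have : Rmat A j j = ‖gramSchmidt ℝ (col A) j‖ := by
    rw [Rmat_apply]
    conv_lhs => rw [gramSchmidt_def'' ℝ (col A) j]
    have h1 : ⟪gramSchmidtNormed ℝ (col A) j, gramSchmidt ℝ (col A) j⟫
        = ‖gramSchmidt ℝ (col A) j‖ := by
      rw [gramSchmidtNormed, real_inner_smul_left, real_inner_self_eq_norm_sq]
      field_simp
      simp
    have h2 : ∀ i ∈ Finset.Iio j, ∀ c : ℝ,
        ⟪gramSchmidtNormed ℝ (col A) j, c • gramSchmidt ℝ (col A) i⟫ = 0 := by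
      intro i hi c
      have : ⟪gramSchmidt ℝ (col A) j, gramSchmidt ℝ (col A) i⟫ = 0 :=
        gramSchmidt_orthogonal ℝ (col A) (Finset.mem_Iio.1 hi).ne'
      rw [real_inner_smul_right, gramSchmidtNormed, real_inner_smul_left, this]
      ring
    rw [inner_add_right, inner_sum, h1, Finset.sum_eq_zero (fun i hi => h2 i hi _), add_zero]
  rw [this]; exact hnorm

lemma isUnit_interp {A : Matrix (Fin n) (Fin n) ℝ} (hA : IsUnit A) {t : ℝ}
    (h0 : 0 ≤ t) (h1 : t ≤ 1) :
    IsUnit ((1 - t) • A + t • Qmat A) := by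
  have hfact : (1 - t) • A + t • Qmat A
      = Qmat A * ((1 - t) • Rmat A + t • (1 : Matrix (Fin n) (Fin n) ℝ)) := by
    rw [Matrix.mul_add, Matrix.mul_smul, Matrix.mul_smul, Qmat_mul_Rmat hA, Matrix.mul_one]
  rw [hfact]
  refine (Qmat_isUnit hA).mul ?_
  have htri : ((1 - t) • Rmat A + t • (1 : Matrix (Fin n) (Fin n) ℝ)).BlockTriangular id := by
    intro i j hij
    simp only [Matrix.add_apply, Matrix.smul_apply, smul_eq_mul]
    rw [Rmat_triangular hA hij, Matrix.one_apply_ne (fun h => (id hij : (j : Fin n) < i).ne (by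
      simpa using h.symm))]
    ring
  rw [Matrix.isUnit_iff_isUnit_det, Matrix.det_of_upperTriangular htri, isUnit_iff_ne_zero]
  refine ne_of_gt (Finset.prod_pos fun j _ => ?_)
  have hr := Rmat_diag_pos hA j
  simp only [Matrix.add_apply, Matrix.smul_apply, Matrix.one_apply_eq, smul_eq_mul, mul_one]
  rcases eq_or_lt_of_le h0 with h | h
  · rw [← h]; simpa using hr
  · nlinarith [mul_nonneg (sub_nonneg.2 h1) hr.le]

end GSDR

open GSDR Matrix in
/-- Gram–Schmidt: there is a continuous map `H : [0,1] × GL(n,ℝ) → GL(n,ℝ)` with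
`H(0, A) = A` for all `A`, `H(1, A)` an orthogonal matrix for all `A`, and
`H(t, Q) = Q` for all `t` whenever `Q` is orthogonal. -/
theorem orthogonal_strong_deformation_retract_of_GL (n : ℕ) :
    ∃ H : I × GL (Fin n) ℝ → GL (Fin n) ℝ,
      Continuous H ∧
      (∀ A : GL (Fin n) ℝ, H (0, A) = A) ∧
      (∀ A : GL (Fin n) ℝ,
        ((H (1, A) : GL (Fin n) ℝ) : Matrix (Fin n) (Fin n) ℝ) ∈
          Matrix.orthogonalGroup (Fin n) ℝ) ∧
      (∀ (t : I) (Q : GL (Fin n) ℝ),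
        ((Q : GL (Fin n) ℝ) : Matrix (Fin n) (Fin n) ℝ) ∈ Matrix.orthogonalGroup (Fin n) ℝ →
          H (t, Q) = Q) := by
  classical
  set F : I × GL (Fin n) ℝ → Matrix (Fin n) (Fin n) ℝ :=
    fun p => (1 - (p.1 : ℝ)) • (p.2 : Matrix (Fin n) (Fin n) ℝ)
      + (p.1 : ℝ) • Qmat (p.2 : Matrix (Fin n) (Fin n) ℝ) with hFdef
  have hFu : ∀ p, IsUnit (F p) := fun p =>
    isUnit_interp (p.2 : GL (Fin n) ℝ).isUnit p.1.2.1 p.1.2.2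
  refine ⟨fun p => (hFu p).unit, ?_, ?_, ?_, ?_⟩
  · -- Continuity
    have hval : ∀ p, ((hFu p).unit : Matrix (Fin n) (Fin n) ℝ) = F p := fun p => (hFu p).unit_spec
    have hcolc : ∀ j, Continuous fun p : I × GL (Fin n) ℝ =>
        GSDR.col (p.2 : Matrix (Fin n) (Fin n) ℝ) j := fun j =>
      (continuous_col j).comp (Units.continuous_val.comp continuous_snd)
    have hli : ∀ p : I × GL (Fin n) ℝ,
        LinearIndependent ℝ (GSDR.col (p.2 : Matrix (Fin n) (Fin n) ℝ)) := fun p =>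
      col_li (p.2 : GL (Fin n) ℝ).isUnit
    have hQc : Continuous fun p : I × GL (Fin n) ℝ =>
        Qmat (p.2 : Matrix (Fin n) (Fin n) ℝ) := by
      refine continuous_matrix fun i j => ?_
      exact (continuous_apply i).comp
        ((PiLp.continuous_ofLp 2 fun _ : Fin n => ℝ).comp (continuous_gsn hcolc hli j))
    have ht : Continuous fun p : I × GL (Fin n) ℝ => (p.1 : ℝ) :=
      continuous_subtype_val.comp continuous_fst
    have hA : Continuous fun p : I × GL (Fin n) ℝ => (p.2 : Matrix (Fin n) (Fin n) ℝ) :=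
      Units.continuous_val.comp continuous_snd
    have hF : Continuous F := ((continuous_const.sub ht).smul hA).add (ht.smul hQc)
    rw [Units.continuous_iff]
    constructor
    · simpa [Function.comp_def, hval] using hF
    · have hinv : (fun p => (((hFu p).unit⁻¹ : (Matrix (Fin n) (Fin n) ℝ)ˣ)
          : Matrix (Fin n) (Fin n) ℝ))
          = fun p => Ring.inverse (F p).det • (F p).adjugate := by
        funext p
        rw [Matrix.coe_units_inv, hval, Matrix.inv_def]
      rw [hinv]
      have hdet : ∀ p, (F p).det ≠ 0 := fun p =>
        isUnit_iff_ne_zero.1 ((Matrix.isUnit_iff_isUnit_det _).1 (hFu p))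
      have : (fun p => Ring.inverse (F p).det • (F p).adjugate)
          = fun p => ((F p).det)⁻¹ • (F p).adjugate := by
        funext p; rw [Ring.inverse_eq_inv']
      rw [this]
      exact (hF.matrix_det.inv₀ hdet).smul hF.matrix_adjugate
  · -- H(0, A) = A
    intro A
    apply Units.ext
    rw [(hFu (0, A)).unit_spec]
    simp [hFdef]
  · -- H(1, A) orthogonal
    intro A
    rw [(hFu (1, A)).unit_spec]
    simp only [hFdef, Set.Icc.coe_one, sub_self, zero_smul, one_smul, zero_add]
    exact Qmat_mem_orth A.isUnit
  · -- H(t, Q) = Q for orthogonal Q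
    intro t Q hQ
    apply Units.ext
    rw [(hFu (t, Q)).unit_spec]
    simp only [hFdef]
    rw [Qmat_of_orth hQ, ← add_smul]
    ring_nf
    exact one_smul _ _
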